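/- Every n×n matrix with nonnegative integer entries whose row sums and column sums all equal k can be written as a sum of k permutation matrices (Birkhoff–von Neumann for integer doubly stochastic matrices). -/
import Mathlib

theorem aux_birkhoff (n : ℕ) : ∀ k (M : Matrix (Fin n) (Fin n) ℕ),
    (∀ i, ∑ j, M i j = k) → (∀ j, ∑ i, M i j = k) →
    ∃ σ : Fin k → Equiv.Perm (Fin n),
      ∀ i j, M i j = ∑ t, if (σ t) i = j then 1 else 0 := by
  intro k
  induction k with
  | zero =>
    intro M hrow _
    refine ⟨Fin.elim0, fun i j => ?_⟩
    have h := hrow i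
    have : M i j = 0 := by
      have := Finset.sum_eq_zero_iff.mp h
      exact this j (Finset.mem_univ j)
    simp [this]
  | succ m ih =>
    intro M hrow hcol
    -- Hall's marriage theorem
    set t : Fin n → Finset (Fin n) := fun i => Finset.univ.filter (fun j => M i j ≠ 0) with ht
    have hall : ∀ s : Finset (Fin n), s.card ≤ (s.biUnion t).card := by
      intro s
      have key : (m + 1) * s.card ≤ (m + 1) * (s.biUnion t).card := by
        calc (m + 1) * s.card = ∑ i ∈ s, ∑ j, M i j := by
              rw [Finset.sum_congr rfl (fun i _ => hrow i)]
              simp [mul_comm]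
          _ = ∑ i ∈ s, ∑ j ∈ s.biUnion t, M i j := by
              refine Finset.sum_congr rfl (fun i hi => ?_)
              symm
              refine Finset.sum_subset (Finset.subset_univ _) (fun j _ hj => ?_)
              by_contra hne
              exact hj (Finset.mem_biUnion.mpr ⟨i, hi, by simp [ht, hne]⟩)
          _ = ∑ j ∈ s.biUnion t, ∑ i ∈ s, M i j := Finset.sum_comm
          _ ≤ ∑ j ∈ s.biUnion t, ∑ i, M i j := by
              refine Finset.sum_le_sum (fun j _ => ?_)
              exact Finset.sum_le_sum_of_subset (Finset.subset_univ s)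
          _ = (m + 1) * (s.biUnion t).card := by
              rw [Finset.sum_congr rfl (fun j _ => hcol j)]
              simp [mul_comm]
      exact Nat.le_of_mul_le_mul_left key (Nat.succ_pos m)
    obtain ⟨f, hfinj, hf⟩ :=
      (Finset.all_card_le_biUnion_card_iff_existsInjective' t).mp hall
    have hfM : ∀ i, M i (f i) ≠ 0 := by
      intro i
      have := hf i
      simpa [ht] using this
    let e : Equiv.Perm (Fin n) := Equiv.ofBijective f (Finite.injective_iff_bijective.mp hfinj)
    have he : ∀ i, e i = f i := fun i => rfl
    set M' : Matrix (Fin n) (Fin n) ℕ := fun i j => M i j - (if e i = j then 1 else 0) with hM'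
    have hdecomp : ∀ i j, M i j = M' i j + (if e i = j then 1 else 0) := by
      intro i j
      by_cases h : e i = j
      · subst h
        have : 1 ≤ M i (e i) := Nat.one_le_iff_ne_zero.mpr (by rw [he]; exact hfM i)
        simp [hM', Nat.sub_add_cancel this]
      · simp [hM', h]
    have hrow' : ∀ i, ∑ j, M' i j = m := by
      intro i
      have h1 : ∑ j, M i j = (∑ j, M' i j) + ∑ j, (if e i = j then 1 else 0) := by
        rw [← Finset.sum_add_distrib]
        exact Finset.sum_congr rfl (fun j _ => hdecomp i j)
      have h2 : ∑ j, (if e i = j then 1 else 0) = 1 := by simp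
      have := hrow i
      omega
    have hcol' : ∀ j, ∑ i, M' i j = m := by
      intro j
      have h1 : ∑ i, M i j = (∑ i, M' i j) + ∑ i, (if e i = j then 1 else 0) := by
        rw [← Finset.sum_add_distrib]
        exact Finset.sum_congr rfl (fun i _ => hdecomp i j)
      have h2 : ∑ i, (if e i = j then 1 else 0) = 1 := by
        rw [Finset.sum_congr rfl (fun i _ => by
          rw [show ((if e i = j then 1 else 0) : ℕ) = (if i = e.symm j then 1 else 0) by
            simp [Equiv.eq_symm_apply, eq_comm]])]
        simp
      have := hcol j
      omega
    obtain ⟨σ', hσ'⟩ := ih M' hrow' hcol'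
    refine ⟨Fin.cons e σ', fun i j => ?_⟩
    rw [Fin.sum_univ_succ]
    simp only [Fin.cons_zero, Fin.cons_succ]
    rw [hdecomp i j, ← hσ' i j]
    omega

theorem stmt_5 (n k : ℕ) (hk : 1 ≤ k) (M : Matrix (Fin n) (Fin n) ℕ)
    (hrow : ∀ i, ∑ j, M i j = k) (hcol : ∀ j, ∑ i, M i j = k) :
    ∃ σ : Fin k → Equiv.Perm (Fin n),
      ∀ i j, M i j = ∑ t, if (σ t) i = j then 1 else 0 := by
  exact aux_birkhoff n k M hrow hcol
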